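/- Let q = p^r ≡ 1 (mod 4) for a prime p, with q = x² + y², x ≡ 1 (mod 4), y even, and p ∤ x when p ≡ 1 (mod 4). Let χ_4 be a character of F_q* of order 4. Then J(χ_4,χ_4)² + J(χ̄_4,χ̄_4)² = 2x² - 2y² = 4x² - 2q. -/

import Mathlib

open Complex

/-- Ring hom from ℤ√-1 determined by a square root of -1. -/
def jqPhi {R : Type*} [CommRing R] (j : R) (hj : j * j = -1) : ℤ√(-1) →+* R where
  toFun z := (z.re : R) + (z.im : R) * j
  map_one' := by simp
  map_mul' z w := by
    simp only [Zsqrtd.re_mul, Zsqrtd.im_mul]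
    push_cast
    linear_combination (-(z.im : R) * (w.im : R)) * hj
  map_zero' := by simp
  map_add' z w := by
    simp only [Zsqrtd.re_add, Zsqrtd.im_add]
    push_cast
    ring

lemma jqPhi_apply {R : Type*} [CommRing R] (j : R) (hj : j * j = -1) (z : ℤ√(-1)) :
    jqPhi j hj z = (z.re : R) + (z.im : R) * j := rfl

lemma jqPhiC_eq (z : ℤ√(-1)) : jqPhi I Complex.I_mul_I z = GaussianInt.toComplex z := by
  rw [jqPhi_apply, GaussianInt.toComplex_def]

lemma jqPhiC_injective : Function.Injective (jqPhi I Complex.I_mul_I) := by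
  intro z w h
  rw [jqPhiC_eq, jqPhiC_eq] at h
  exact GaussianInt.toComplex_inj.1 h

/-- Kummer/Lucas: p ∤ C(3m, m) for m = (p^r-1)/4, p ≡ 1 mod 4. -/
lemma jq_binom (p : ℕ) (hp : p.Prime) (hp4 : p % 4 = 1) (r : ℕ) :
    ¬ p ∣ Nat.choose (3 * ((p ^ r - 1) / 4)) ((p ^ r - 1) / 4) := by
  haveI : Fact p.Prime := ⟨hp⟩
  have hp1 : 1 < p := hp.one_lt
  induction r with
  | zero => simpa using hp.one_lt.ne'
  | succ r ih =>
    set m := (p ^ r - 1) / 4 with hm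
    set u := (p - 1) / 4 with hu
    have hpr1 : p ^ r % 4 = 1 := by
      rw [Nat.pow_mod, hp4, Nat.one_pow]
    have hpow_pos : 0 < p ^ r := Nat.pow_pos (n := r) (by omega)
    have h4m : 4 * m = p ^ r - 1 := by
      have : 4 ∣ p ^ r - 1 := by omega
      omega
    have h4u : 4 * u = p - 1 := by omega
    have h4mz : (4 : ℤ) * m + 1 = (p:ℤ) ^ r := by
      exact_mod_cast congrArg (Nat.cast (R := ℤ)) (by omega : 4*m+1 = p^r)
    have h4uz : (4 : ℤ) * u + 1 = (p:ℤ) := by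
      exact_mod_cast congrArg (Nat.cast (R := ℤ)) (by omega : 4*u+1 = p)
    have hm' : (p ^ (r + 1) - 1) / 4 = p * m + u := by
      have hpp : 0 < p ^ (r+1) := Nat.pow_pos (by omega)
      have h1 : (4 : ℤ) * (p * m + u) + 1 = (p:ℤ) ^ (r + 1) := by
        have hh : ((p:ℤ)) ^ (r+1) = p * p ^ r := by ring
        rw [hh]
        linear_combination (p : ℤ) * h4mz + h4uz
      have h1' : 4 * (p * m + u) + 1 = p ^ (r + 1) := by exact_mod_cast h1
      omega
    rw [hm']
    have hulim : 3 * u < p := by omega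
    have hmod : (p * m + u) % p = u := by
      rw [Nat.mul_add_mod]
      exact Nat.mod_eq_of_lt (by omega)
    have hdiv : (p * m + u) / p = m := by
      rw [Nat.mul_add_div (by omega)]
      simp [Nat.div_eq_of_lt (show u < p by omega)]
    have hmod3 : (3 * (p * m + u)) % p = 3 * u := by
      have h : 3 * (p * m + u) = p * (3 * m) + 3 * u := by ring
      rw [h, Nat.mul_add_mod]
      exact Nat.mod_eq_of_lt hulim
    have hdiv3 : (3 * (p * m + u)) / p = 3 * m := by
      have h : 3 * (p * m + u) = p * (3 * m) + 3 * u := by ring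
      rw [h, Nat.mul_add_div (by omega)]
      simp [Nat.div_eq_of_lt hulim]
    have lucas := Choose.choose_modEq_choose_mod_mul_choose_div_nat
      (n := 3 * (p * m + u)) (k := p * m + u) (p := p)
    rw [hmod, hdiv, hmod3, hdiv3] at lucas
    intro hdvd
    have hz : Nat.choose (3 * u) u * Nat.choose (3 * m) m ≡ 0 [MOD p] :=
      (lucas.symm.trans (Nat.modEq_zero_iff_dvd.2 hdvd))
    have hdvd2 : p ∣ Nat.choose (3 * u) u * Nat.choose (3 * m) m :=
      Nat.modEq_zero_iff_dvd.1 hz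
    rcases (Nat.Prime.dvd_mul hp).1 hdvd2 with h | h
    · have hc : Nat.choose (3 * u) u ∣ Nat.factorial (3 * u) := by
        have h1 : Nat.choose (3*u) u * (Nat.factorial u * Nat.factorial (3*u - u)) =
            Nat.factorial (3*u) := by
          rw [← mul_assoc]
          exact Nat.choose_mul_factorial_mul_factorial (by omega)
        exact ⟨_, h1.symm⟩
      have hpf : p ∣ Nat.factorial (3 * u) := h.trans hc
      have := (Nat.Prime.dvd_factorial hp).1 hpf
      omega
    · exact ih h

/-- Inert case: p ≡ 3 mod 4, a odd, a² + b² = p^r  ⟹  a² = p^r. -/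
lemma jq_inert (p : ℕ) (hp : p.Prime) (hp3 : p % 4 = 3) :
    ∀ r : ℕ, ∀ a b : ℤ, Odd a → a ^ 2 + b ^ 2 = (p : ℤ) ^ r → a ^ 2 = (p : ℤ) ^ r := by
  haveI : Fact p.Prime := ⟨hp⟩
  intro r
  induction r using Nat.strong_induction_on with
  | _ r ih =>
  intro a b ha h
  rcases r with _ | r
  · -- a² + b² = 1, a odd
    have ha0 : a ≠ 0 := by rintro rfl; rw [Int.odd_iff] at ha; norm_num at ha
    rw [pow_zero] at h ⊢
    have h1 : 1 ≤ |a| := Int.one_le_abs ha0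
    have h2 : 1 ≤ a ^ 2 := by nlinarith [_root_.sq_abs a]
    have h3 : a ^ 2 ≤ 1 := by nlinarith [sq_nonneg b]
    omega
  · have hr1 : 1 ≤ r + 1 := by omega
    have hcast : ((a : ZMod p))^2 + ((b : ZMod p))^2 = 0 := by
      have := congrArg (fun z : ℤ => (z : ZMod p)) h
      push_cast at this
      rw [this]
      simp [ZMod.natCast_self, zero_pow]
    have hb0 : (b : ZMod p) = 0 := by
      by_contra hb
      have hsq : IsSquare (-1 : ZMod p) := by
        refine ⟨(a : ZMod p) * ((b : ZMod p))⁻¹, ?_⟩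
        field_simp
        linear_combination -hcast
      rw [ZMod.exists_sq_eq_neg_one_iff] at hsq
      exact hsq (by omega)
    have ha0 : (a : ZMod p) = 0 := by
      have : ((a : ZMod p))^2 = 0 := by rw [← hcast, hb0]; ring
      exact pow_eq_zero_iff (by norm_num) |>.1 this
    have hpa : (p : ℤ) ∣ a := by exact_mod_cast (ZMod.intCast_zmod_eq_zero_iff_dvd a p).1 ha0
    have hpb : (p : ℤ) ∣ b := by exact_mod_cast (ZMod.intCast_zmod_eq_zero_iff_dvd b p).1 hb0
    obtain ⟨a', rfl⟩ := hpa
    obtain ⟨b', rfl⟩ := hpb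
    have hp0 : (p : ℤ) ≠ 0 := by exact_mod_cast hp.ne_zero
    rcases r with _ | r
    · -- p²(a'²+b'²) = p : impossible
      exfalso
      have : (p:ℤ)^2 * (a'^2 + b'^2) = (p:ℤ)^1 := by linear_combination h
      have hple : (p:ℤ) ∣ 1 := by
        have h2 : (p:ℤ) * ((p:ℤ) * (a'^2+b'^2)) = (p:ℤ) * 1 := by linear_combination this
        have h3 := mul_left_cancel₀ hp0 h2
        exact ⟨_, h3.symm⟩
      have := Int.le_of_dvd one_pos hple
      have : (2:ℤ) ≤ p := by exact_mod_cast hp.two_le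
      omega
    · have ha' : Odd a' := by
        rcases Int.even_or_odd a' with he | ho
        · exfalso
          obtain ⟨c, hc⟩ := he
          have : Even ((p:ℤ) * a') := ⟨p*c, by rw [hc]; ring⟩
          exact (Int.not_odd_iff_even.2 this) ha
        · exact ho
      have h' : a'^2 + b'^2 = (p:ℤ)^r := by
        have h2 : (p:ℤ)^2 * (a'^2 + b'^2) = (p:ℤ)^2 * (p:ℤ)^r := by
          rw [← pow_add, show 2 + r = r + 1 + 1 by omega]
          linear_combination h
        exact mul_left_cancel₀ (pow_ne_zero 2 hp0) h2
      have hfin := ih r (by omega) a' b' ha' h'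
      calc ((p:ℤ)*a')^2 = (p:ℤ)^2 * a'^2 := by ring
        _ = (p:ℤ)^2 * (p:ℤ)^r := by rw [hfin]
        _ = (p:ℤ)^(r+1+1) := by rw [← pow_add, show 2 + r = r + 1 + 1 by omega]

/-- Euler-style helper: if q = p^r ≡ 1 mod 4, a,x odd, a²+b²=x²+y²=q, and p ∤ (ax - by),
then a² = x². -/
lemma jq_euler (p : ℕ) (hp : p.Prime) (r : ℕ) (q : ℤ) (hq : q = (p : ℤ) ^ r)
    (hq4 : q % 4 = 1) (a b x y : ℤ) (ha : Odd a) (hx : Odd x)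
    (h1 : a ^ 2 + b ^ 2 = q) (h2 : x ^ 2 + y ^ 2 = q)
    (hV : ¬ (p : ℤ) ∣ (a * x - b * y)) : a ^ 2 = x ^ 2 := by
  have hp0 : (p : ℤ) ≠ 0 := by exact_mod_cast hp.ne_zero
  have hq0 : q ≠ 0 := by rw [hq]; exact pow_ne_zero r hp0
  have hpz : Prime (p : ℤ) := Nat.prime_iff_prime_int.mp hp
  have key : (a * x + b * y) * (a * x - b * y) = q * (a ^ 2 + x ^ 2 - q) := by
    linear_combination (-(y ^ 2)) * h1 + (a ^ 2 - q) * h2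
  have hcop : IsCoprime q (a * x - b * y) := by
    rw [hq]
    exact (hpz.coprime_iff_not_dvd.2 hV).pow_left
  obtain ⟨t, ht⟩ : q ∣ a * x + b * y :=
    hcop.dvd_of_dvd_mul_right ⟨_, key⟩
  have ident2 : (a * x + b * y) ^ 2 + (a * y - b * x) ^ 2 = q ^ 2 := by
    linear_combination (x ^ 2 + y ^ 2) * h1 + q * h2
  rw [ht] at ident2
  have hq2 : 0 < q ^ 2 := by positivity
  have ht2 : t ^ 2 ≤ 1 := by nlinarith [sq_nonneg (a * y - b * x)]
  have htr : t = -1 ∨ t = 0 ∨ t = 1 := by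
    have h1' : -1 ≤ t := by nlinarith [sq_nonneg (t + 1)]
    have h2' : t ≤ 1 := by nlinarith [sq_nonneg (t - 1)]
    omega
  rcases htr with rfl | rfl | rfl
  · -- t = -1 : W = 0
    have hW : a * y - b * x = 0 := by
      have : (a * y - b * x) ^ 2 = 0 := by nlinarith
      exact pow_eq_zero_iff (by norm_num) |>.1 this
    have e1 : a ^ 2 * y ^ 2 = b ^ 2 * x ^ 2 := by linear_combination (a * y + b * x) * hW
    apply mul_left_cancel₀ hq0
    linear_combination e1 + x ^ 2 * h1 - a ^ 2 * h2
  · -- t = 0 : a² + x² = q, parity contradiction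
    exfalso
    have hU : a * x + b * y = 0 := by rw [ht]; ring
    have e2 : a ^ 2 * x ^ 2 = b ^ 2 * y ^ 2 := by linear_combination (a * x - b * y) * hU
    have b2 : b ^ 2 = q - a ^ 2 := by linarith
    have y2 : y ^ 2 = q - x ^ 2 := by linarith
    rw [b2, y2] at e2
    have e3 : a ^ 2 + x ^ 2 = q := by
      apply mul_left_cancel₀ hq0
      linear_combination e2
    obtain ⟨c, hc⟩ := ha
    obtain ⟨d, hd⟩ := hx
    obtain ⟨E, hE⟩ : ∃ E : ℤ, q = 4 * E + 2 :=
      ⟨c ^ 2 + c + d ^ 2 + d, by rw [hc, hd] at e3; linear_combination -e3⟩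
    omega
  · -- t = 1 : W = 0
    have hW : a * y - b * x = 0 := by
      have : (a * y - b * x) ^ 2 = 0 := by nlinarith
      exact pow_eq_zero_iff (by norm_num) |>.1 this
    have e1 : a ^ 2 * y ^ 2 = b ^ 2 * x ^ 2 := by linear_combination (a * y + b * x) * hW
    apply mul_left_cancel₀ hq0
    linear_combination e1 + x ^ 2 * h1 - a ^ 2 * h2

/-- Uniqueness of the odd part of representations of q = p^r as a sum of two squares. -/
lemma jq_unique (p : ℕ) (hp : p.Prime) (r : ℕ) (q : ℤ) (hq : q = (p : ℤ) ^ r)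
    (hq4 : q % 4 = 1) (a b x y : ℤ) (ha : Odd a) (hx : Odd x)
    (hpa : p % 4 = 1 → ¬ (p : ℤ) ∣ a) (hpx : p % 4 = 1 → ¬ (p : ℤ) ∣ x)
    (h1 : a ^ 2 + b ^ 2 = q) (h2 : x ^ 2 + y ^ 2 = q) : a ^ 2 = x ^ 2 := by
  have hpz : Prime (p : ℤ) := Nat.prime_iff_prime_int.mp hp
  by_cases hq1 : q = 1
  · subst hq1
    have sq_one : ∀ c d : ℤ, Odd c → c ^ 2 + d ^ 2 = 1 → c ^ 2 = 1 := by
      intro c d hc h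
      have hc0 : c ≠ 0 := by rintro rfl; rw [Int.odd_iff] at hc; norm_num at hc
      have g1 : 1 ≤ |c| := Int.one_le_abs hc0
      have g2 : 1 ≤ c ^ 2 := by nlinarith [_root_.sq_abs c]
      have g3 : c ^ 2 ≤ 1 := by nlinarith [sq_nonneg d]
      omega
    rw [sq_one a b ha h1, sq_one x y hx h2]
  · have hr : 1 ≤ r := by
      rcases Nat.eq_zero_or_pos r with rfl | h
      · simp at hq; exact absurd hq hq1
      · exact h
    have hpodd : p % 2 = 1 := by
      rcases hp.eq_two_or_odd with h2' | h2'
      · exfalso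
        have h2d : (2 : ℤ) ∣ q := by
          rw [hq, h2']
          push_cast
          exact dvd_pow_self 2 (by omega)
        omega
      · exact h2'
    have hp14 : p % 4 = 1 ∨ p % 4 = 3 := by omega
    rcases hp14 with hp1 | hp3
    · -- split case
      have hpa' := hpa hp1
      have hpx' := hpx hp1
      by_cases hV : (p : ℤ) ∣ (a * x - b * y)
      · -- then p ∤ a*x + b*y
        have hU : ¬ (p : ℤ) ∣ (a * x + b * y) := by
          intro hU
          have hsum : (p : ℤ) ∣ 2 * (a * x) := by
            have : (a * x + b * y) + (a * x - b * y) = 2 * (a * x) := by ring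
            rw [← this]; exact dvd_add hU hV
          have hp5 : 5 ≤ p := by
            have := hp.two_le; omega
          rcases hpz.dvd_mul.1 hsum with h | h
          · have := Int.le_of_dvd (by norm_num) h
            omega
          · rcases hpz.dvd_mul.1 h with h' | h'
            · exact hpa' h'
            · exact hpx' h'
        have h2' : x ^ 2 + (-y) ^ 2 = q := by linear_combination h2
        have hV' : ¬ (p : ℤ) ∣ (a * x - b * (-y)) := by
          intro h
          apply hU
          have : a * x - b * (-y) = a * x + b * y := by ring
          rwa [this] at h
        exact jq_euler p hp r q hq hq4 a b x (-y) ha hx h1 h2' hV'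
      · exact jq_euler p hp r q hq hq4 a b x y ha hx h1 h2 hV
    · rw [jq_inert p hp hp3 r a b ha (by rw [← hq]; exact h1),
        jq_inert p hp hp3 r x y hx (by rw [← hq]; exact h2)]

open Finset in
lemma jq_sum_ne_zero (F : Type*) [Field F] [Fintype F] (p r : ℕ) (hp : p.Prime) [CharP F p]
    (hq : Fintype.card F = p ^ r) (hp4 : p % 4 = 1) (hr : 1 ≤ r) :
    ∑ t : F, t ^ (3 * ((Fintype.card F - 1) / 4)) * (1 - t) ^ (3 * ((Fintype.card F - 1) / 4))
      ≠ 0 := by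
  classical
  set q := Fintype.card F with hqdef
  set m := (q - 1) / 4 with hmdef
  set k := 3 * m with hkdef
  have hq4 : q % 4 = 1 := by rw [hq, Nat.pow_mod, hp4, Nat.one_pow]
  have hq5 : 5 ≤ q := by
    have h1 : p ≤ p ^ r := Nat.le_self_pow (by omega) p
    have h2 : 5 ≤ p := by have := hp.two_le; omega
    omega
  have h4m : 4 * m + 1 = q := by omega
  have hm1 : 1 ≤ m := by omega
  -- power sum evaluations
  have hps0 : ∀ n : ℕ, n < q - 1 → ∑ t : F, t ^ n = 0 := fun n hn =>
    FiniteField.sum_pow_lt_card_sub_one F n hn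
  have hps1 : ∑ t : F, t ^ (q - 1) = -1 := by
    have hstep : ∀ t : F, t ^ (q - 1) = (1 : F) - (if t = 0 then 1 else 0) := by
      intro t
      split_ifs with h
      · rw [h, zero_pow (by omega)]; ring
      · rw [FiniteField.pow_card_sub_one_eq_one t h]; ring
    rw [Finset.sum_congr rfl fun t _ => hstep t, Finset.sum_sub_distrib,
      Finset.sum_ite_eq' Finset.univ (0 : F) (fun _ => (1 : F))]
    simp only [Finset.mem_univ, if_true, Finset.sum_const, Finset.card_univ, nsmul_eq_mul, mul_one]
    rw [← hqdef, FiniteField.cast_card_eq_zero]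
    ring
  have hps2 : ∀ n : ℕ, q - 1 < n → n < 2 * (q - 1) → ∑ t : F, t ^ n = 0 := by
    intro n h1 h2
    have hstep : ∀ t : F, t ^ n = t ^ (n - (q - 1)) := by
      intro t
      by_cases ht : t = 0
      · rw [ht, zero_pow (by omega), zero_pow (by omega)]
      · conv_lhs => rw [show n = (n - (q - 1)) + (q - 1) by omega]
        rw [pow_add, FiniteField.pow_card_sub_one_eq_one t ht, mul_one]
    rw [Finset.sum_congr rfl fun t _ => hstep t]
    exact hps0 _ (by omega)
  -- binomial expansion
  have hbin : ∀ t : F, (1 - t) ^ k = ∑ i ∈ range (k + 1), (-t) ^ i * (k.choose i : F) := by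
    intro t
    rw [show (1 : F) - t = -t + 1 by ring, add_pow]
    exact Finset.sum_congr rfl fun i _ => by rw [one_pow, mul_one]
  have step0 : ∀ t : F, t ^ k * (1 - t) ^ k
      = ∑ i ∈ range (k + 1), (-1 : F) ^ i * (k.choose i : F) * t ^ (k + i) := by
    intro t
    rw [hbin t, Finset.mul_sum]
    refine Finset.sum_congr rfl fun i _ => ?_
    rw [neg_pow, pow_add]
    ring
  have step1 : ∑ t : F, t ^ k * (1 - t) ^ k
      = ∑ i ∈ range (k + 1), (-1 : F) ^ i * (k.choose i : F) * ∑ t : F, t ^ (k + i) := by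
    rw [Finset.sum_congr rfl fun t _ => step0 t, Finset.sum_comm]
    exact Finset.sum_congr rfl fun i _ => (Finset.mul_sum _ _ _).symm
  rw [step1, Finset.sum_eq_single m]
  · rw [show k + m = q - 1 by omega, hps1]
    have hmeq : (p ^ r - 1) / 4 = m := by rw [← hq]
    have hC : (Nat.choose k m : F) ≠ 0 := by
      rw [Ne, CharP.cast_eq_zero_iff F p]
      have := jq_binom p hp hp4 r
      rwa [hmeq] at this
    exact mul_ne_zero (mul_ne_zero (pow_ne_zero _ (neg_ne_zero.2 one_ne_zero)) hC)
      (neg_ne_zero.2 one_ne_zero)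
  · intro i hi him
    rw [Finset.mem_range] at hi
    rcases lt_trichotomy i m with h | h | h
    · rw [hps0 (k + i) (by omega), mul_zero]
    · exact absurd h him
    · rw [hps2 (k + i) (by omega) (by omega), mul_zero]
  · intro h
    exact absurd (Finset.mem_range.2 (by omega)) h

lemma jq_four_roots {z : ℂ} (h : z ^ 4 = 1) :
    z = 1 ∨ z = -1 ∨ z = Complex.I ∨ z = -Complex.I := by
  have hI : Complex.I * Complex.I = -1 := Complex.I_mul_I
  have hfac : (z - 1) * (z + 1) * (z - Complex.I) * (z + Complex.I) = 0 := by
    linear_combination h + (1 - z ^ 2) * hI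
  rcases mul_eq_zero.1 hfac with h3 | h4
  · rcases mul_eq_zero.1 h3 with h5 | h6
    · rcases mul_eq_zero.1 h5 with h7 | h8
      · exact Or.inl (sub_eq_zero.1 h7)
      · exact Or.inr (Or.inl (eq_neg_of_add_eq_zero_left h8))
    · exact Or.inr (Or.inr (Or.inl (sub_eq_zero.1 h6)))
  · exact Or.inr (Or.inr (Or.inr (eq_neg_of_add_eq_zero_left h4)))

lemma jq_I_primitive : IsPrimitiveRoot Complex.I 4 := by
  constructor
  · exact Complex.I_pow_four
  · intro l hl
    rw [← Nat.div_add_mod l 4, pow_add, pow_mul, Complex.I_pow_four, one_pow, one_mul] at hl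
    have h2 : l % 4 < 4 := Nat.mod_lt _ (by norm_num)
    have h0 : l % 4 = 0 := by
      rcases (show l % 4 = 0 ∨ l % 4 = 1 ∨ l % 4 = 2 ∨ l % 4 = 3 by omega) with h | h | h | h
      · exact h
      · rw [h, pow_one] at hl; norm_num [Complex.ext_iff] at hl
      · rw [h, sq, Complex.I_mul_I] at hl; norm_num at hl
      · exfalso
        rw [h, show Complex.I ^ 3 = -Complex.I by
          rw [pow_succ, Complex.I_sq]; ring] at hl
        norm_num [Complex.ext_iff] at hl
    exact Nat.dvd_of_mod_eq_zero h0

open Classical in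
/-- The lift of the values of a quartic character to `ℤ√-1`. -/
noncomputable def jqC {F : Type*} [Field F] [Fintype F] (χ : MulChar F ℂ) : F → ℤ√(-1) := fun t =>
  if χ t = 1 then 1 else if χ t = -1 then -1
  else if χ t = Complex.I then ⟨0, 1⟩ else if χ t = -Complex.I then ⟨0, -1⟩ else 0

lemma jqC_spec {F : Type*} [Field F] [Fintype F] (χ : MulChar F ℂ) (hχ4 : χ ^ 4 = 1) (t : F) :
    jqPhi Complex.I Complex.I_mul_I (jqC χ t) = χ t := by
  unfold jqC
  split_ifs with h1 h2 h3 h4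
  · rw [map_one, h1]
  · rw [map_neg, map_one, h2]
  · rw [h3]; simp [jqPhi_apply]
  · rw [h4]; simp [jqPhi_apply]
  · rw [map_zero]
    by_cases ht : IsUnit t
    · exfalso
      have h4' : (χ t) ^ 4 = 1 := by
        rw [← MulChar.pow_apply' χ (by norm_num) t, hχ4, MulChar.one_apply ht]
      rcases jq_four_roots h4' with h | h | h | h <;> tauto
    · rw [MulChar.map_nonunit χ ht]

theorem jacobiSum_quartic_sq_sum {F : Type*} [Field F] [Fintype F]
    (p r : ℕ) (hp : p.Prime) (hq : Fintype.card F = p ^ r)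
    (hq4 : Fintype.card F % 4 = 1) (x y : ℤ)
    (hxy : (Fintype.card F : ℤ) = x ^ 2 + y ^ 2)
    (hx : x % 4 = 1) (hy : Even y)
    (hpx : p % 4 = 1 → ¬ (p : ℤ) ∣ x)
    (χ : MulChar F ℂ) (hord : orderOf χ = 4) :
    jacobiSum χ χ ^ 2 + jacobiSum χ⁻¹ χ⁻¹ ^ 2 = 2 * (x : ℂ) ^ 2 - 2 * (y : ℂ) ^ 2 ∧
    2 * (x : ℂ) ^ 2 - 2 * (y : ℂ) ^ 2 = 4 * (x : ℂ) ^ 2 - 2 * (Fintype.card F : ℂ) := by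
  classical
  set q := Fintype.card F with hqd
  have hcard2 : 2 ≤ q := Fintype.one_lt_card
  have hq5 : 5 ≤ q := by omega
  have hr1 : 1 ≤ r := by
    by_contra hr
    have hr0 : r = 0 := by omega
    rw [hr0, pow_zero] at hq
    omega
  -- characteristic
  have hchar : ringChar F = p := by
    obtain ⟨n, hn, hcard⟩ := FiniteField.card F (ringChar F)
    have hdq : p ∣ q := by rw [hq]; exact dvd_pow_self p (by omega)
    have h2 : p ∣ ringChar F :=
      hp.dvd_of_dvd_pow (show p ∣ ringChar F ^ (n : ℕ) by rw [← hcard]; exact hdq)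
    exact ((Nat.prime_dvd_prime_iff_eq hp hn).mp h2).symm
  haveI hcharP : CharP F p := hchar ▸ ringChar.charP F
  have hχ4 : χ ^ 4 = 1 := by rw [← hord]; exact pow_orderOf_eq_one χ
  have hχ1 : χ ≠ 1 := by intro h; rw [h, orderOf_one] at hord; norm_num at hord
  have hχ2 : χ ^ 2 ≠ 1 := by
    intro h
    have := orderOf_dvd_of_pow_eq_one h
    rw [hord] at this
    norm_num at this
  set Φ := jqPhi Complex.I Complex.I_mul_I with hΦdef
  have hroots : ∀ t : F, Φ (jqC χ t) = χ t := jqC_spec χ hχ4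
  let χ₀ : MulChar F (ℤ√(-1)) :=
  { toFun := jqC χ
    map_one' := jqPhiC_injective (by rw [hroots 1, map_one, map_one])
    map_mul' := fun s t => jqPhiC_injective
      (by rw [hroots (s * t), map_mul, map_mul, hroots s, hroots t])
    map_nonunit' := fun s hs => jqPhiC_injective
      (by rw [hroots s, MulChar.map_nonunit χ hs, map_zero]) }
  have hroots' : ∀ t : F, Φ (χ₀ t) = χ t := fun t => hroots t
  have hcomp : χ = MulChar.ringHomComp χ₀ Φ :=
    MulChar.ext fun u => by rw [MulChar.ringHomComp_apply]; exact (hroots' u).symm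
  set α := jacobiSum χ₀ χ₀ with hα
  have hJΦ : jacobiSum χ χ = Φ α := by
    conv_lhs => rw [hcomp]
    rw [jacobiSum_ringHomComp]
  -- parity of α
  obtain ⟨z, hz, hzJ⟩ := exists_jacobiSum_eq_neg_one_add (R := ℂ) (by norm_num : (2:ℕ) < 4)
    hχ4 hχ4 (by omega : 4 ∣ q - 1) jq_I_primitive
  obtain ⟨w, hw⟩ : ∃ w : ℤ√(-1), Φ w = z := by
    refine Algebra.adjoin_induction ?_ ?_ ?_ ?_ hz
    · rintro xx (rfl : xx = Complex.I)
      exact ⟨⟨0, 1⟩, by simp [hΦdef, jqPhi_apply]⟩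
    · intro rr
      exact ⟨(rr : ℤ√(-1)), by rw [map_intCast]; simp⟩
    · rintro x' y' _ _ ⟨w1, rfl⟩ ⟨w2, rfl⟩
      exact ⟨w1 + w2, map_add _ _ _⟩
    · rintro x' y' _ _ ⟨w1, rfl⟩ ⟨w2, rfl⟩
      exact ⟨w1 * w2, map_mul _ _ _⟩
  have hΦi : Φ ⟨0, 1⟩ = Complex.I := by simp [hΦdef, jqPhi_apply]
  have hαw : α = -1 + w * ((⟨0, 1⟩ : ℤ√(-1)) - 1) ^ 2 := by
    apply jqPhiC_injective
    show Φ α = Φ _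
    rw [map_add, map_neg, map_one, map_mul, map_pow, map_sub, map_one, hw, hΦi, ← hJΦ, hzJ]
  have hapar : Odd α.re ∧ Even α.im := by
    rw [hαw]
    constructor
    · refine ⟨w.im - 1, ?_⟩
      simp [Zsqrtd.re_mul, Zsqrtd.im_mul, Zsqrtd.re_add, Zsqrtd.im_add, sq]
      ring
    · refine ⟨-w.re, ?_⟩
      simp [Zsqrtd.re_mul, Zsqrtd.im_mul, Zsqrtd.re_add, Zsqrtd.im_add, sq]
      ring
  -- norm
  have hnorm : jacobiSum χ χ * jacobiSum χ⁻¹ χ⁻¹ = (q : ℂ) := by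
    refine jacobiSum_mul_jacobiSum_inv ?_ hχ1 hχ1 ?_
    · rw [ringChar.eq_zero, hchar]
      exact fun h => hp.ne_zero h.symm
    · intro h; apply hχ2; rwa [pow_two]
  have hval_conj : ∀ s : F, χ⁻¹ s = starRingEnd ℂ (χ s) := by
    intro s
    by_cases hs : IsUnit s
    · rw [MulChar.inv_apply_eq_inv']
      have h4 : (χ s) ^ 4 = 1 := by
        rw [← MulChar.pow_apply' χ (by norm_num) s, hχ4, MulChar.one_apply hs]
      rcases jq_four_roots h4 with h | h | h | h <;> rw [h] <;>
        simp [Complex.inv_I, Complex.conj_I, inv_neg]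
    · rw [MulChar.map_nonunit _ hs, MulChar.map_nonunit χ hs, map_zero]
  have hconj : jacobiSum χ⁻¹ χ⁻¹ = starRingEnd ℂ (jacobiSum χ χ) := by
    simp only [jacobiSum, map_sum, map_mul]
    exact Finset.sum_congr rfl fun t _ => by rw [hval_conj, hval_conj]
  set a := α.re with had
  set b := α.im with hbd
  have hΦα : Φ α = (a : ℂ) + (b : ℂ) * Complex.I := rfl
  have hconjΦ : starRingEnd ℂ (Φ α) = (a : ℂ) - (b : ℂ) * Complex.I := by
    rw [hΦα, map_add, map_mul, Complex.conj_I, map_intCast, map_intCast]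
    ring
  have hq_eq : (a ^ 2 + b ^ 2 : ℤ) = (q : ℤ) := by
    have hC : ((a : ℂ) + b * Complex.I) * ((a : ℂ) - b * Complex.I) = (q : ℂ) := by
      rw [← hΦα, ← hconjΦ, ← hJΦ, ← hconj]
      exact hnorm
    have hC2 : ((a ^ 2 + b ^ 2 : ℤ) : ℂ) = (q : ℂ) := by
      push_cast
      linear_combination hC + (b : ℂ) ^ 2 * Complex.I_sq
    exact_mod_cast hC2
  have hpz : Prime (p : ℤ) := Nat.prime_iff_prime_int.mp hp
  have hqp : (q : ℤ) = (p : ℤ) ^ r := by exact_mod_cast hq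
  -- p ∤ a in the split case
  have hpa : p % 4 = 1 → ¬ (p : ℤ) ∣ a := by
    intro hp4 hdvd
    have hq_dvd : (p : ℤ) ∣ (q : ℤ) := by
      rw [hqp]; exact dvd_pow_self _ (by omega)
    have hpb : (p : ℤ) ∣ b := by
      refine hpz.dvd_of_dvd_pow (n := 2) ?_
      have hb2 : b ^ 2 = (q : ℤ) - a ^ 2 := by linarith [hq_eq]
      rw [hb2]
      exact dvd_sub hq_dvd (dvd_pow hdvd (by norm_num))
    obtain ⟨g, hg⟩ := IsCyclic.exists_generator (α := Fˣ)
    have hog : orderOf g = q - 1 := by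
      rw [orderOf_eq_card_of_forall_mem_zpowers hg, Nat.card_eq_fintype_card, Fintype.card_units]
    set m := (q - 1) / 4 with hm
    have h4m : 4 * m + 1 = q := by omega
    have hm1 : 1 ≤ m := by omega
    set gg : F := (g : F) with hggdef
    have hgg0 : gg ≠ 0 := Units.ne_zero g
    have hpow_q : gg ^ (q - 1) = 1 := FiniteField.pow_card_sub_one_eq_one gg hgg0
    have h2m : gg ^ (2 * m) * gg ^ (2 * m) = 1 := by
      rw [← pow_add, show 2 * m + 2 * m = q - 1 by omega, hpow_q]
    have hneg : gg ^ (2 * m) = -1 := by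
      rcases mul_self_eq_one_iff.1 h2m with h | h
      · exfalso
        have hu : g ^ (2 * m) = 1 := by
          apply Units.val_eq_one.1
          rw [Units.val_pow_eq_pow_val]
          exact h
        have hd := orderOf_dvd_of_pow_eq_one hu
        rw [hog] at hd
        have := Nat.le_of_dvd (by omega) hd
        omega
      · exact h
    have h3m_sq : gg ^ (3 * m) * gg ^ (3 * m) = -1 := by
      rw [← pow_add, show 3 * m + 3 * m = (q - 1) + 2 * m by omega, pow_add, hpow_q, one_mul, hneg]
    have hIunit : IsUnit gg := isUnit_iff_ne_zero.2 hgg0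
    have h4gg : (χ gg) ^ 4 = 1 := by
      rw [← MulChar.pow_apply' χ (by norm_num) gg, hχ4, MulChar.one_apply hIunit]
    have hnot2 : (χ gg) ^ 2 ≠ 1 := by
      intro hgg2
      apply hχ2
      apply MulChar.ext
      intro uu
      obtain ⟨e, he⟩ := mem_powers_iff_mem_zpowers.mpr (hg uu)
      rw [MulChar.pow_apply' χ (by norm_num) _, MulChar.one_apply uu.isUnit, ← he,
        Units.val_pow_eq_pow_val, map_pow, ← pow_mul, mul_comm, pow_mul, hgg2, one_pow]
    have hggI : χ gg = Complex.I ∨ χ gg = -Complex.I := by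
      rcases jq_four_roots h4gg with h | h | h | h
      · exact absurd (by rw [h]; ring) hnot2
      · exact absurd (by rw [h]; ring) hnot2
      · exact Or.inl h
      · exact Or.inr h
    obtain ⟨j', hj', hΨg⟩ : ∃ j', ∃ hj' : j' * j' = -1, jqPhi j' hj' (χ₀ gg) = gg ^ (3 * m) := by
      rcases hggI with h | h
      · have hχ₀gg : χ₀ gg = ⟨0, 1⟩ := jqPhiC_injective (by
          rw [hroots' gg, h]
          simp [hΦdef, jqPhi_apply])
        exact ⟨gg ^ (3 * m), h3m_sq, by rw [hχ₀gg]; simp [jqPhi_apply]⟩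
      · have hχ₀gg : χ₀ gg = ⟨0, -1⟩ := jqPhiC_injective (by
          rw [hroots' gg, h]
          simp [hΦdef, jqPhi_apply])
        refine ⟨-(gg ^ (3 * m)), by rw [neg_mul_neg]; exact h3m_sq, ?_⟩
        rw [hχ₀gg]
        simp [jqPhi_apply]
    set Ψ := jqPhi j' hj' with hΨdef2
    have hΨall : ∀ t : F, Ψ (χ₀ t) = t ^ (3 * m) := by
      intro t
      by_cases ht : t = 0
      · rw [ht, MulChar.map_zero χ₀, map_zero, zero_pow (by omega)]
      · have htu : IsUnit t := isUnit_iff_ne_zero.2 ht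
        obtain ⟨e, he⟩ := mem_powers_iff_mem_zpowers.mpr (hg htu.unit)
        have hte : t = gg ^ e := by
          rw [← htu.unit_spec, ← he, Units.val_pow_eq_pow_val]
        rw [hte, map_pow, map_pow, hΨg, ← pow_mul, mul_comm, pow_mul]
    have hΨα : Ψ α = ∑ t : F, t ^ (3 * m) * (1 - t) ^ (3 * m) := by
      rw [hα]
      simp only [jacobiSum, map_sum, map_mul]
      exact Finset.sum_congr rfl fun t _ => by rw [hΨall, hΨall]
    have hΨα0 : Ψ α = 0 := by
      have happ : Ψ α = (a : F) + (b : F) * j' := rfl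
      obtain ⟨a', ha'⟩ := hdvd
      obtain ⟨b', hb'⟩ := hpb
      rw [happ, ha', hb']
      push_cast
      rw [CharP.cast_eq_zero F p]
      ring
    exact jq_sum_ne_zero F p r hp hq hp4 hr1 (by rw [← hΨα]; exact hΨα0)
  -- uniqueness
  have hqz4 : (q : ℤ) % 4 = 1 := by omega
  have hxodd : Odd x := by rw [Int.odd_iff]; omega
  have hax : a ^ 2 = x ^ 2 :=
    jq_unique p hp r (q : ℤ) hqp hqz4 a b x y hapar.1 hxodd hpa hpx hq_eq hxy.symm
  have hby : b ^ 2 = y ^ 2 := by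
    have := hq_eq
    rw [hxy] at this
    linarith [hax]
  have haxC : ((a : ℂ)) ^ 2 = (x : ℂ) ^ 2 := by exact_mod_cast congrArg (Int.cast : ℤ → ℂ) hax
  have hbyC : ((b : ℂ)) ^ 2 = (y : ℂ) ^ 2 := by exact_mod_cast congrArg (Int.cast : ℤ → ℂ) hby
  constructor
  · rw [hJΦ, hconj, hJΦ, hconjΦ, hΦα]
    linear_combination 2 * (b : ℂ) ^ 2 * Complex.I_sq + 2 * haxC - 2 * hbyC
  · have hCq : ((q : ℤ) : ℂ) = (x : ℂ) ^ 2 + (y : ℂ) ^ 2 := by exact_mod_cast congrArg (Int.cast : ℤ → ℂ) hxy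
    push_cast at hCq
    linear_combination 2 * hCq
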